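/- Let (X, ≤) be a finite partially ordered set. For x ∈ X, let a(x) be the number of elements y ∈ X that are not strictly greater than x. Then for every natural number i with 0 ≤ i ≤ |X|, the number of elements x ∈ X with a(x) ≤ i is at most i. -/

import Mathlib

theorem stmt0 {X : Type*} [Fintype X] [PartialOrder X]
    [DecidableRel ((· < ·) : X → X → Prop)]
    (a : X → ℕ)
    (ha : ∀ x : X, a x = (Finset.univ.filter (fun y => ¬ x < y)).card)
    (i : ℕ) (hi : i ≤ Fintype.card X) :
    (Finset.univ.filter (fun x => a x ≤ i)).card ≤ i := by
  set S := Finset.univ.filter (fun x => a x ≤ i) with hS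
  rcases S.eq_empty_or_nonempty with h | h
  · simp [h]
  · obtain ⟨m, hm, hmax⟩ := S.exists_maximal h
    have hsub : S ⊆ Finset.univ.filter (fun y => ¬ m < y) := by
      intro y hy
      simp only [Finset.mem_filter, Finset.mem_univ, true_and]
      exact fun hlt => not_le_of_gt hlt (hmax hy (le_of_lt hlt))
    calc S.card ≤ (Finset.univ.filter (fun y => ¬ m < y)).card :=
          Finset.card_le_card hsub
      _ = a m := (ha m).symm
      _ ≤ i := (Finset.mem_filter.mp hm).2
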